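/- For every m ∈ ℕ and every n ∈ ℕ, the list lgen_m n is sorted in (weakly) descending order and all its elements are ≤ m. -/

import Mathlib

def next (m : ℕ) : List ℕ → List ℕ
  | [] => [0]
  | h :: t =>
    if h < m then (h + 1) :: t
    else
      match next m t with
      | [] => []
      | x :: t' => x :: x :: t'

def lgen (m : ℕ) : ℕ → List ℕ
  | 0 => []
  | n + 1 => next m (lgen m n)

lemma next_inv (m : ℕ) : ∀ l : List ℕ, l.Pairwise (· ≥ ·) → (∀ x ∈ l, x ≤ m) →
    (next m l).Pairwise (· ≥ ·) ∧ ∀ x ∈ next m l, x ≤ m := by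
  intro l
  induction l with
  | nil => intro _ _; simp [next]
  | cons h t ih =>
    intro hs hle
    rw [List.pairwise_cons] at hs
    obtain ⟨hht, hts⟩ := hs
    have hle' : ∀ x ∈ t, x ≤ m := fun x hx => hle x (List.mem_cons_of_mem _ hx)
    obtain ⟨ihs, ihle⟩ := ih hts hle'
    simp only [next]
    by_cases hm : h < m
    · simp only [if_pos hm]
      refine ⟨List.pairwise_cons.mpr ⟨fun b hb => le_trans (hht b hb) (Nat.le_succ h), hts⟩, ?_⟩
      intro x hx
      rcases List.mem_cons.mp hx with rfl | hx
      · omega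
      · exact hle' x hx
    · simp only [if_neg hm]
      cases hnt : next m t with
      | nil => simp
      | cons x t' =>
        rw [hnt] at ihs ihle
        rw [List.pairwise_cons] at ihs
        constructor
        · refine List.pairwise_cons.mpr ⟨?_, List.pairwise_cons.mpr ihs⟩
          intro b hb
          rcases List.mem_cons.mp hb with rfl | hb
          · exact le_refl _
          · exact ihs.1 b hb
        · intro y hy
          rcases List.mem_cons.mp hy with rfl | hy
          · exact ihle y List.mem_cons_self
          · exact ihle y hy

theorem stmt_15 (m n : ℕ) :
    (lgen m n).Pairwise (· ≥ ·) ∧ ∀ x ∈ lgen m n, x ≤ m := by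
  induction n with
  | zero => simp [lgen]
  | succ n ih => exact next_inv m _ ih.1 ih.2
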